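/- Let G be a finite simple graph containing a cycle of length 4. Then there exist two families P₀, P₁ : V(G) → Matrix (Fin 2 × Fin 2) (Fin 2 × Fin 2) ℂ of self-adjoint idempotent matrices such that ∑_{u ∈ V(G)} P₀ u = 1 = ∑_{u ∈ V(G)} P₁ u, P₀ u · P₁ v = 0 = P₁ v · P₀ u whenever u and v are not adjacent in G, and there exist vertices u, v with P₀ u · P₁ v ≠ P₁ v · P₀ u. -/
import Mathlib


open Matrix Kronecker

private lemma kron_conjTranspose (A B : Matrix (Fin 2) (Fin 2) ℂ) :
    (A ⊗ₖ B)ᴴ = Aᴴ ⊗ₖ Bᴴ := by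
  ext ⟨i, k⟩ ⟨j, l⟩
  simp [conjTranspose_apply, kroneckerMap_apply, mul_comm]

/-- If a finite simple graph `G` contains a cycle of length `4`,
then there are families `P₀, P₁ : V(G) → M₄(ℂ)` (matrices indexed by
`Fin 2 × Fin 2`) of self-adjoint idempotents satisfying the relations of
`Mor⁺(K₂, G)` (each family sums to `1`, and `P₀ u * P₁ v = 0 = P₁ v * P₀ u`
whenever `u ≁ v`) together with a pair `u, v` for which `P₀ u` and `P₁ v`
do not commute. -/
theorem stmt16 {V : Type*} [Fintype V] [DecidableEq V] (G : SimpleGraph V)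
    (h4 : ∃ (v : V) (c : G.Walk v v), c.IsCycle ∧ c.length = 4) :
    ∃ P₀ P₁ : V → Matrix (Fin 2 × Fin 2) (Fin 2 × Fin 2) ℂ,
      (∀ u, (P₀ u)ᴴ = P₀ u ∧ P₀ u * P₀ u = P₀ u) ∧
      (∀ u, (P₁ u)ᴴ = P₁ u ∧ P₁ u * P₁ u = P₁ u) ∧
      (∑ u : V, P₀ u = 1) ∧ (∑ u : V, P₁ u = 1) ∧
      (∀ u v, ¬ G.Adj u v → P₀ u * P₁ v = 0 ∧ P₁ v * P₀ u = 0) ∧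
      (∃ u v, P₀ u * P₁ v ≠ P₁ v * P₀ u) := by
  obtain ⟨v, c, hc, hl⟩ := h4
  cases c with
  | nil => simp at hl
  | cons h₁ p =>
    cases p with
    | nil => simp at hl
    | cons h₂ p =>
      cases p with
      | nil => simp at hl
      | cons h₃ p =>
        cases p with
        | nil => simp at hl
        | cons h₄ p =>
          cases p with
          | cons h₅ p => simp [SimpleGraph.Walk.length_cons] at hl
          | nil =>
            rename_i b w d
            have hnd := hc.2
            simp [SimpleGraph.Walk.support_cons] at hnd
            obtain ⟨⟨hbw, hbd, hbv⟩, ⟨hwd, hwv⟩, hdv⟩ := hnd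
            clear hc hl
            -- the 2×2 building blocks
            set A : Matrix (Fin 2) (Fin 2) ℂ := !![1, 0; 0, 0] with hA
            set A' : Matrix (Fin 2) (Fin 2) ℂ := !![0, 0; 0, 1] with hA'
            set B : Matrix (Fin 2) (Fin 2) ℂ := !![1/2, 1/2; 1/2, 1/2] with hB
            set B' : Matrix (Fin 2) (Fin 2) ℂ := !![1/2, -1/2; -1/2, 1/2] with hB'
            have herm : ∀ M : Matrix (Fin 2) (Fin 2) ℂ,
                Mᴴ = M → ((M ⊗ₖ (1 : Matrix (Fin 2) (Fin 2) ℂ))ᴴ = M ⊗ₖ 1) := by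
              intro M hM
              rw [kron_conjTranspose, hM, conjTranspose_one]
            have idem : ∀ M : Matrix (Fin 2) (Fin 2) ℂ,
                M * M = M →
                (M ⊗ₖ (1 : Matrix (Fin 2) (Fin 2) ℂ)) * (M ⊗ₖ 1) = M ⊗ₖ 1 := by
              intro M hM
              rw [← mul_kronecker_mul, hM, Matrix.one_mul]
            have hAh : Aᴴ = A := by
              ext i j; fin_cases i <;> fin_cases j <;> simp [hA, conjTranspose_apply]
            have hA'h : A'ᴴ = A' := by
              ext i j; fin_cases i <;> fin_cases j <;> simp [hA', conjTranspose_apply]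
            have hBh : Bᴴ = B := by
              ext i j; fin_cases i <;> fin_cases j <;>
                simp [hB, conjTranspose_apply] <;> norm_num
            have hB'h : B'ᴴ = B' := by
              ext i j; fin_cases i <;> fin_cases j <;>
                simp [hB', conjTranspose_apply] <;> norm_num
            have hAi : A * A = A := by
              ext i j; fin_cases i <;> fin_cases j <;>
                simp [hA, Matrix.mul_apply, Fin.sum_univ_two]
            have hA'i : A' * A' = A' := by
              ext i j; fin_cases i <;> fin_cases j <;>
                simp [hA', Matrix.mul_apply, Fin.sum_univ_two]
            have hBi : B * B = B := by
              ext i j; fin_cases i <;> fin_cases j <;>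
                simp [hB, Matrix.mul_apply, Fin.sum_univ_two] <;> norm_num
            have hB'i : B' * B' = B' := by
              ext i j; fin_cases i <;> fin_cases j <;>
                simp [hB', Matrix.mul_apply, Fin.sum_univ_two] <;> norm_num
            have hAsum : A + A' = 1 := by
              ext i j; fin_cases i <;> fin_cases j <;>
                simp [hA, hA', Matrix.one_apply]
            have hBsum : B + B' = 1 := by
              ext i j; fin_cases i <;> fin_cases j <;>
                simp [hB, hB', Matrix.one_apply] <;> norm_num
            refine ⟨(fun u => if u = v then A ⊗ₖ 1 else if u = w then A' ⊗ₖ 1 else 0),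
                    (fun u => if u = b then B ⊗ₖ 1 else if u = d then B' ⊗ₖ 1 else 0),
                    ?_, ?_, ?_, ?_, ?_, ⟨v, b, ?_⟩⟩
            · intro u
              dsimp only
              split_ifs
              · exact ⟨herm A hAh, idem A hAi⟩
              · exact ⟨herm A' hA'h, idem A' hA'i⟩
              · simp
            · intro u
              dsimp only
              split_ifs
              · exact ⟨herm B hBh, idem B hBi⟩
              · exact ⟨herm B' hB'h, idem B' hB'i⟩
              · simp
            · have key : ∀ u : V,
                  (if u = v then A ⊗ₖ (1 : Matrix (Fin 2) (Fin 2) ℂ) else if u = w then A' ⊗ₖ 1 else 0)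
                  = (if u = v then A ⊗ₖ 1 else 0) + (if u = w then A' ⊗ₖ 1 else 0) := by
                intro u
                by_cases h1 : u = v
                · subst h1
                  rw [if_pos rfl, if_pos rfl, if_neg (fun h => hwv h.symm), add_zero]
                · rw [if_neg h1, if_neg h1, zero_add]
              rw [Finset.sum_congr rfl (fun u _ => key u), Finset.sum_add_distrib]
              simp [Finset.sum_ite_eq', ← add_kronecker, hAsum, one_kronecker_one]
            · have key : ∀ u : V,
                  (if u = b then B ⊗ₖ (1 : Matrix (Fin 2) (Fin 2) ℂ) else if u = d then B' ⊗ₖ 1 else 0)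
                  = (if u = b then B ⊗ₖ 1 else 0) + (if u = d then B' ⊗ₖ 1 else 0) := by
                intro u
                by_cases h1 : u = b
                · subst h1
                  rw [if_pos rfl, if_pos rfl, if_neg (fun h => hbd h), add_zero]
                · rw [if_neg h1, if_neg h1, zero_add]
              rw [Finset.sum_congr rfl (fun u _ => key u), Finset.sum_add_distrib]
              simp [Finset.sum_ite_eq', ← add_kronecker, hBsum, one_kronecker_one]
            · intro u u' hadj
              dsimp only
              constructor <;>
              · split_ifs with e1 e2 e3 e4 <;>
                  first
                  | simp
                  | (exfalso; apply hadj; subst_vars;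
                     first
                     | exact h₁
                     | exact h₄.symm
                     | exact h₂.symm
                     | exact h₃)
            · dsimp only
              simp only [eq_self_iff_true, if_true, if_neg (Ne.symm hbv)]
              intro hEq
              have := congrFun (congrFun hEq ((0 : Fin 2), (0 : Fin 2))) ((1 : Fin 2), (0 : Fin 2))
              rw [← mul_kronecker_mul, ← mul_kronecker_mul] at this
              simp only [kroneckerMap_apply, Matrix.mul_apply, Fin.sum_univ_two,
                Matrix.one_apply_eq, mul_one, hA, hB] at this
              norm_num at this
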